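/- Let H be a real Hilbert space with a Hilbert (orthonormal) basis (φ_p)_{p∈ℕ}, let T > 0 and 0 < α < 1, and let λ : ℕ → ℝ be a sequence of positive reals with λ_p → +∞. Assume that E_{α,1}(−x) > 0 for all x ≥ 0 and that there is a constant C₀ > 0 with E_{α,1}(−x) ≤ C₀ / (1 + x) for all x ≥ 0. Define h_p := λ_p^{−1/2} φ_p and g_p := (λ_p^{1/2} E_{α,1}(−λ_p T^α))^{−1} φ_p. Then ‖h_p‖ = λ_p^{−1/2} → 0 as p → ∞, while ‖g_p‖ ≥ (T^α / C₀) λ_p^{1/2} for every p, so ‖g_p‖ → +∞ as p → ∞. -/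
import Mathlib


/-- The real Mittag-Leffler function `E_{α,β}(x) = ∑ xᵏ / Γ(αk + β)`. -/
noncomputable def mittagLefflerReal (α β x : ℝ) : ℝ :=
  ∑' k : ℕ, x ^ k / Real.Gamma (α * k + β)

/-- Ill-posedness of the backward problem: with data `h_p = λ_p^{−1/2} φ_p` and corresponding
initial values `g_p = (λ_p^{1/2} E_{α,1}(−λ_p Tᵅ))^{−1} φ_p`, one has `‖h_p‖ = λ_p^{−1/2} → 0`
while `‖g_p‖ ≥ (Tᵅ/C₀) λ_p^{1/2} → +∞`. -/
theorem backward_problem_illposed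
    {H : Type*} [NormedAddCommGroup H] [InnerProductSpace ℝ H] [CompleteSpace H]
    (φ : HilbertBasis ℕ ℝ H) (T α : ℝ) (hT : 0 < T) (hα0 : 0 < α) (hα1 : α < 1)
    (lam : ℕ → ℝ) (hpos : ∀ p, 0 < lam p)
    (htop : Filter.Tendsto lam Filter.atTop Filter.atTop)
    (hMLpos : ∀ x : ℝ, 0 ≤ x → 0 < mittagLefflerReal α 1 (-x))
    (C₀ : ℝ) (hC₀ : 0 < C₀)
    (hbound : ∀ x : ℝ, 0 ≤ x → mittagLefflerReal α 1 (-x) ≤ C₀ / (1 + x))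
    (h g : ℕ → H)
    (hh : ∀ p, h p = (Real.sqrt (lam p))⁻¹ • φ p)
    (hg : ∀ p, g p =
      (Real.sqrt (lam p) * mittagLefflerReal α 1 (-(lam p * T ^ α)))⁻¹ • φ p) :
    (∀ p, ‖h p‖ = (Real.sqrt (lam p))⁻¹) ∧
      Filter.Tendsto (fun p => ‖h p‖) Filter.atTop (nhds 0) ∧
      (∀ p, (T ^ α / C₀) * Real.sqrt (lam p) ≤ ‖g p‖) ∧
      Filter.Tendsto (fun p => ‖g p‖) Filter.atTop Filter.atTop := by
  have hφ : ∀ p, ‖φ p‖ = 1 := fun p => φ.orthonormal.1 p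
  have hTα : 0 < T ^ α := Real.rpow_pos_of_pos hT α
  have hsqrt : ∀ p, 0 < Real.sqrt (lam p) := fun p => Real.sqrt_pos.2 (hpos p)
  have hnormh : ∀ p, ‖h p‖ = (Real.sqrt (lam p))⁻¹ := by
    intro p
    rw [hh p, norm_smul, hφ, mul_one, Real.norm_eq_abs,
      abs_of_nonneg (inv_nonneg.2 (hsqrt p).le)]
  have hx : ∀ p, (0:ℝ) ≤ lam p * T ^ α := fun p =>
    mul_nonneg (hpos p).le hTα.le
  have hML : ∀ p, 0 < mittagLefflerReal α 1 (-(lam p * T ^ α)) := fun p =>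
    hMLpos _ (hx p)
  have hnormg : ∀ p, ‖g p‖ =
      (Real.sqrt (lam p) * mittagLefflerReal α 1 (-(lam p * T ^ α)))⁻¹ := by
    intro p
    rw [hg p, norm_smul, hφ, mul_one, Real.norm_eq_abs,
      abs_of_nonneg (inv_nonneg.2 (mul_pos (hsqrt p) (hML p)).le)]
  have hsqrt_top : Filter.Tendsto (fun p => Real.sqrt (lam p)) Filter.atTop Filter.atTop := by
    have := (tendsto_rpow_atTop (by norm_num : (0:ℝ) < 1/2)).comp htop
    refine this.congr fun p => ?_
    simp only [Function.comp]
    rw [Real.sqrt_eq_rpow]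
  have hgbound : ∀ p, (T ^ α / C₀) * Real.sqrt (lam p) ≤ ‖g p‖ := by
    intro p
    rw [hnormg p]
    have hden : 0 < Real.sqrt (lam p) * mittagLefflerReal α 1 (-(lam p * T ^ α)) :=
      mul_pos (hsqrt p) (hML p)
    have hE' : mittagLefflerReal α 1 (-(lam p * T ^ α)) * (1 + lam p * T ^ α) ≤ C₀ :=
      (le_div_iff₀ (by linarith [mul_pos (hpos p) hTα])).mp (hbound _ (hx p))
    have hss : Real.sqrt (lam p) * Real.sqrt (lam p) = lam p :=
      Real.mul_self_sqrt (hpos p).le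
    rw [le_inv_comm₀ (mul_pos (div_pos hTα hC₀) (hsqrt p)) hden,
      show (T ^ α / C₀ * Real.sqrt (lam p))⁻¹ = C₀ / (T ^ α * Real.sqrt (lam p)) by
        field_simp,
      le_div_iff₀ (mul_pos hTα (hsqrt p))]
    nlinarith [hML p, hE', hss, hTα, (hsqrt p), mul_pos hTα (hML p)]
  refine ⟨hnormh, ?_, hgbound, ?_⟩
  · simp only [hnormh]
    exact hsqrt_top.inv_tendsto_atTop
  · apply Filter.tendsto_atTop_mono hgbound
    exact Filter.Tendsto.const_mul_atTop (by positivity) hsqrt_top
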